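/- Let Γ be a group acting on a set X and let k ≥ D_Γ(X). If G is a finite graph that admits a Γ-faithful embedding into X and D(G) > k, then ext_D(X, Γ; k) ≥ 1 + |V(G)|. -/

import Mathlib

open Pointwise

/-- A `k`-coloring of `X` is distinguishing with respect to the action of `Γ`
if the only group element preserving it is the identity. -/
def DistColoring (Γ : Type*) {X : Type*} [Group Γ] [MulAction Γ X] {k : ℕ}
    (c : X → Fin k) : Prop :=
  ∀ γ : Γ, (∀ x : X, c (γ • x) = c x) → γ = 1

/-- `W` is a fixing set for the action of `Γ` on `X`: every non-identity element
of `Γ` moves some element of `W`. -/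
def IsFixingSet (Γ : Type*) {X : Type*} [Group Γ] [MulAction Γ X] (W : Set X) : Prop :=
  ∀ γ : Γ, γ ≠ 1 → ∃ s ∈ W, γ • s ≠ s

/-- `ExtProp Γ X k m` says that for every fixing set `W ⊆ X` with `|W| ≥ m`, every
`k`-coloring of `X \ W` extends to a distinguishing `k`-coloring of `X`.
The distinguishing extension number `ext_D(X, Γ; k)` is the least such `m`. -/
def ExtProp (Γ : Type*) (X : Type*) [Group Γ] [MulAction Γ X] (k m : ℕ) : Prop :=
  ∀ W : Set X, IsFixingSet Γ W → (m : Cardinal) ≤ Cardinal.mk W →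
    ∀ c : X → Fin k, ∃ c' : X → Fin k, (∀ x ∉ W, c' x = c x) ∧ DistColoring Γ c'

/-- The automorphism group of a graph `G`, as the subgroup of permutations of the
vertices that preserve adjacency. -/
def SimpleGraph.autGroup {V : Type*} (G : SimpleGraph V) : Subgroup (Equiv.Perm V) where
  carrier := {σ | ∀ u v, G.Adj (σ u) (σ v) ↔ G.Adj u v}
  one_mem' := fun _ _ => Iff.rfl
  mul_mem' := by
    intro a b ha hb u v
    simpa [Equiv.Perm.mul_apply] using (ha (b u) (b v)).trans (hb u v)
  inv_mem' := by
    intro a ha u v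
    rw [← ha (a⁻¹ u) (a⁻¹ v)]
    simp

/-- Let `Γ` act on `X` and let `k ≥ D_Γ(X)` (i.e. `X` has a distinguishing
`k`-coloring).  If a finite graph `G` admits a `Γ`-faithful embedding `φ` into `X`
(an injection whose image's setwise stabilizer `Γ'` is isomorphic to `Aut(G)` via `ψ`
with `γ • φ(v) = φ(ψ(γ)(v))` for all `γ ∈ Γ'` and `v`), and `D(G) > k` (i.e. `G` has
no distinguishing `k`-coloring), then `ext_D(X, Γ; k) ≥ 1 + |V(G)|`; equivalently,
every `m` witnessing the extension property for `(X, Γ; k)` satisfies `m ≥ 1 + |V(G)|`. -/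
theorem extension_number_faithful_embedding_large {Γ X V : Type*} [Group Γ] [MulAction Γ X]
    [Fintype V] (G : SimpleGraph V) (k : ℕ)
    (hkD : ∃ c : X → Fin k, DistColoring Γ c)
    (φ : V → X) (hφ : Function.Injective φ)
    (ψ : MulAction.stabilizer Γ (Set.range φ) ≃* G.autGroup)
    (hψ : ∀ (γ : MulAction.stabilizer Γ (Set.range φ)) (v : V),
      (γ : Γ) • φ v = φ (((ψ γ : G.autGroup) : Equiv.Perm V) v))
    (hDG : ¬ ∃ c : V → Fin k, DistColoring G.autGroup c) :
    ∀ m : ℕ, ExtProp Γ X k m → 1 + Fintype.card V ≤ m := by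
  intro m hm
  by_contra hcon
  push_neg at hcon
  have hmle : m ≤ Fintype.card V := by omega
  -- k must be positive, otherwise we get a contradiction directly
  have hk : 0 < k := by
    by_contra hk0
    push_neg at hk0
    interval_cases k
    obtain ⟨c, -⟩ := hkD
    have hXempty : IsEmpty X := ⟨fun x => (c x).elim0⟩
    have hVempty : IsEmpty V := ⟨fun v => hXempty.false (φ v)⟩
    exact hDG ⟨fun v => hVempty.elim v, fun σ _ => Subtype.ext (Equiv.ext fun v => hVempty.elim v)⟩
  -- the image of φ is a fixing set
  have hfix : IsFixingSet Γ (Set.range φ) := by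
    intro γ hγ1
    by_contra hall
    push_neg at hall
    have hstab : γ ∈ MulAction.stabilizer Γ (Set.range φ) := by
      have : γ • Set.range φ = Set.range φ := by
        ext x
        simp only [Set.mem_smul_set, Set.mem_range]
        constructor
        · rintro ⟨y, ⟨v, rfl⟩, rfl⟩
          exact ⟨v, (hall (φ v) ⟨v, rfl⟩).symm⟩
        · rintro ⟨v, rfl⟩
          exact ⟨φ v, ⟨v, rfl⟩, hall (φ v) ⟨v, rfl⟩⟩
      exact this
    set γ' : MulAction.stabilizer Γ (Set.range φ) := ⟨γ, hstab⟩
    have hψid : ∀ v : V, ((ψ γ' : G.autGroup) : Equiv.Perm V) v = v := by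
      intro v
      apply hφ
      rw [← hψ γ' v]
      exact hall (φ v) ⟨v, rfl⟩
    have : ψ γ' = 1 := Subtype.ext (Equiv.ext hψid)
    have : γ' = 1 := by
      have := congrArg ψ.symm this
      simpa using this
    exact hγ1 (congrArg Subtype.val this)
  have hcard : (m : Cardinal) ≤ Cardinal.mk (Set.range φ) := by
    haveI : Fintype (Set.range φ) := Set.Finite.fintype (Set.finite_range φ)
    rw [Cardinal.mk_fintype, Set.card_range_of_injective hφ]
    exact_mod_cast hmle
  obtain ⟨c', hc'eq, hc'dist⟩ := hm (Set.range φ) hfix hcard (fun _ => ⟨0, hk⟩)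
  -- the induced coloring on V is not distinguishing
  have hnd : ¬ DistColoring G.autGroup (fun v => c' (φ v)) := fun h => hDG ⟨_, h⟩
  unfold DistColoring at hnd
  push_neg at hnd
  obtain ⟨σ, hσfix, hσne⟩ := hnd
  set γ' : MulAction.stabilizer Γ (Set.range φ) := ψ.symm σ
  have hγφ : ∀ v : V, (γ' : Γ) • φ v = φ ((σ : Equiv.Perm V) v) := by
    intro v
    have := hψ γ' v
    rwa [show ψ γ' = σ from ψ.apply_symm_apply σ] at this
  have hγ1 : (γ' : Γ) = 1 := by
    apply hc'dist
    intro x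
    by_cases hx : x ∈ Set.range φ
    · obtain ⟨v, rfl⟩ := hx
      rw [hγφ v]
      have := hσfix v
      exact this
    · have hmem : (γ' : Γ) • x ∉ Set.range φ := by
        intro hmem
        apply hx
        have hst : (γ' : Γ) • Set.range φ = Set.range φ := γ'.2
        have : (γ' : Γ)⁻¹ • ((γ' : Γ) • x) ∈ (γ' : Γ)⁻¹ • Set.range φ :=
          Set.smul_mem_smul_set hmem
        rwa [inv_smul_smul, inv_smul_eq_iff.mpr hst.symm] at this
      rw [hc'eq _ hmem, hc'eq _ hx]
  have : γ' = 1 := Subtype.ext hγ1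
  have hσ1 : σ = 1 := by
    calc σ = ψ γ' := (ψ.apply_symm_apply σ).symm
    _ = ψ 1 := by rw [this]
    _ = 1 := map_one ψ
  exact hσne hσ1
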